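/- Let X be a finite set, A a nonnegative-integer-valued measure on X² with total mass n = A(X²) < ∞, and fix x_{n+1} ∈ X. Then the number of tuples (x_1, ..., x_n) ∈ X^n satisfying A = Σ_{j=1}^n δ_{(x_j, x_{j+1})} is at most |X| · (∏_{l₁∈X} Ā(l₁)!) / (∏_{l∈X²} A(l)!), where Ā(l₁) := A({l₁} × X). -/

import Mathlib

open Finset

section AuxForCount

def auxNxt {X : Type*} (n : ℕ) (xlast : X) (x : Fin n → X) (j : Fin n) : X :=
  if h : (j : ℕ) + 1 < n then x ⟨(j : ℕ) + 1, h⟩ else xlast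

lemma aux_count {X : Type*} [Fintype X] [DecidableEq X] (c : X → ℕ) (d : ℕ)
    (hd : ∑ w, c w = d) :
    (univ.filter fun f : Fin d → X => ∀ w, c w = (univ.filter fun i => f i = w).card).card
      * ∏ w, (c w).factorial ≤ d.factorial := by
  classical
  set T := {f : Fin d → X // ∀ w, c w = (univ.filter fun i => f i = w).card} with hT
  have hcard : ∀ (f : T) (w : X), (univ.filter fun i => f.1 i = w).card = c w :=
    fun f w => (f.2 w).symm
  -- the map sending (f, σ) to an equiv
  let E : T → (∀ w, Equiv.Perm (Fin (c w))) → ((Σ w : X, Fin (c w)) → Fin d) :=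
    fun (f : T) (σ : ∀ w, Equiv.Perm (Fin (c w))) (p : Σ w : X, Fin (c w)) => ((univ.filter fun i => f.1 i = p.1).orderIsoOfFin (hcard f p.1) (σ p.1 p.2) : Fin d)
  have hEfst : ∀ (f : T) (σ : ∀ w, Equiv.Perm (Fin (c w))) (p : Σ w : X, Fin (c w)), f.1 (E f σ p) = p.1 := by
    intro f σ p
    have := ((univ.filter fun i => f.1 i = p.1).orderIsoOfFin (hcard f p.1) (σ p.1 p.2)).2
    exact (mem_filter.mp this).2
  have hbij : ∀ f σ, Function.Bijective (E f σ) := by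
    intro f σ
    constructor
    · rintro ⟨w, k⟩ ⟨w', k'⟩ h
      have hw : w = w' := by
        have h1 := hEfst f σ ⟨w, k⟩
        have h2 := hEfst f σ ⟨w', k'⟩
        simp only at h1 h2
        rw [h] at h1; rw [h1] at h2; exact h2
      subst hw
      have : σ w k = σ w k' := by
        have := Subtype.coe_injective (α := Fin d) h
        exact ((univ.filter fun i => f.1 i = w).orderIsoOfFin (hcard f w)).injective this
      have : k = k' := (σ w).injective this
      simp [this]
    · intro i
      have hmem : i ∈ univ.filter fun j => f.1 j = f.1 i := by simp
      refine ⟨⟨f.1 i, (σ (f.1 i)).symm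
        (((univ.filter fun j => f.1 j = f.1 i).orderIsoOfFin (hcard f (f.1 i))).symm ⟨i, hmem⟩)⟩, ?_⟩
      simp only [E, Equiv.apply_symm_apply, OrderIso.apply_symm_apply]
  let Ψ : T × (∀ w, Equiv.Perm (Fin (c w))) → ((Σ w : X, Fin (c w)) ≃ Fin d) :=
    fun fσ => Equiv.ofBijective (E fσ.1 fσ.2) (hbij fσ.1 fσ.2)
  have hΨinj : Function.Injective Ψ := by
    rintro ⟨f, σ⟩ ⟨g, τ⟩ h
    have hE : E f σ = E g τ := by
      funext p
      have := congrArg (fun e => (e : (Σ w : X, Fin (c w)) ≃ Fin d) p) h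
      simpa [Ψ, Equiv.ofBijective] using this
    have hfg : f = g := by
      apply Subtype.ext; funext i
      obtain ⟨p, hp⟩ := (hbij f σ).2 i
      have h1 : f.1 i = p.1 := by rw [← hp]; exact hEfst f σ p
      have h2 : g.1 i = p.1 := by
        rw [← hp, hE]; exact hEfst g τ p
      rw [h1, h2]
    subst hfg
    have hστ : σ = τ := by
      funext w
      apply Equiv.ext; intro k
      have := congrFun hE ⟨w, k⟩
      have := Subtype.coe_injective (α := Fin d) this
      exact ((univ.filter fun i => f.1 i = w).orderIsoOfFin (hcard f w)).injective this
    rw [hστ]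
  have hle := Fintype.card_le_of_injective Ψ hΨinj
  have hcardSigma : Fintype.card (Σ w : X, Fin (c w)) = d := by simp [hd]
  rw [Fintype.card_prod, Fintype.card_pi, Fintype.card_equiv (Fintype.equivFinOfCardEq hcardSigma),
    hcardSigma] at hle
  simp only [Fintype.card_perm, Fintype.card_fin] at hle
  have hcT : Fintype.card T
      = (univ.filter fun f : Fin d → X => ∀ w, c w = (univ.filter fun i => f i = w).card).card :=
    Fintype.card_subtype _
  rw [← hcT]
  exact hle

lemma rank_orderIsoOfFin {α : Type*} [LinearOrder α] (s : Finset α) {m : ℕ}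
    (h : s.card = m) (k : Fin m) :
    (s.filter fun a => a < (s.orderIsoOfFin h k : α)).card = k := by
  classical
  have himg : (s.filter fun a => a < (s.orderIsoOfFin h k : α))
      = (univ.filter fun i : Fin m => i < k).image (fun i => (s.orderIsoOfFin h i : α)) := by
    ext a
    simp only [mem_filter, mem_image, mem_univ, true_and]
    constructor
    · rintro ⟨ha, hlt⟩
      refine ⟨(s.orderIsoOfFin h).symm ⟨a, ha⟩, ?_, by simp⟩
      rw [← OrderIso.lt_iff_lt (s.orderIsoOfFin h)]
      simp only [OrderIso.apply_symm_apply]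
      exact Subtype.coe_lt_coe.mp (by simpa using hlt)
    · rintro ⟨i, hik, rfl⟩
      refine ⟨(s.orderIsoOfFin h i).2, ?_⟩
      exact Subtype.coe_lt_coe.mpr ((OrderIso.lt_iff_lt (s.orderIsoOfFin h)).mpr hik)
  rw [himg, Finset.card_image_of_injective _ (fun i j hij => (s.orderIsoOfFin h).injective
    (Subtype.coe_injective hij)),
    show (univ.filter fun i : Fin m => i < k) = Finset.Iio k by ext i; simp]
  simp

end AuxForCount


theorem count_sequences_with_edge_measure_le
    {X : Type*} [Fintype X] [DecidableEq X] (A : X × X → ℕ) (n : ℕ)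
    (hn : ∑ l : X × X, A l = n) (xlast : X) :
    ((Finset.univ.filter fun x : Fin n → X =>
        ∀ l : X × X, A l = (Finset.univ.filter fun j : Fin n =>
          (x j, if h : (j : ℕ) + 1 < n then x ⟨(j : ℕ) + 1, h⟩ else xlast) = l).card).card : ℝ) ≤
      (Fintype.card X : ℝ) *
        (∏ l₁ : X, (Nat.factorial (∑ l₂ : X, A (l₁, l₂)) : ℝ)) /
        (∏ l : X × X, (Nat.factorial (A l) : ℝ)) := by
  classical
  show ((Finset.univ.filter fun x : Fin n → X =>
        ∀ l : X × X, A l = (Finset.univ.filter fun j : Fin n =>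
          (x j, auxNxt n xlast x j) = l).card).card : ℝ) ≤ _
  set d : X → ℕ := fun v => ∑ w, A (v, w) with hd
  set S : Finset (Fin n → X) := Finset.univ.filter fun x : Fin n → X =>
        ∀ l : X × X, A l = (Finset.univ.filter fun j : Fin n =>
          (x j, auxNxt n xlast x j) = l).card with hS
  -- fiber counts
  have hJ : ∀ x ∈ S, ∀ v, (univ.filter fun j : Fin n => x j = v).card = d v := by
    intro x hx v
    rw [hS, mem_filter] at hx
    have hx' := hx.2
    rw [Finset.card_eq_sum_card_fiberwise (f := fun j => auxNxt n xlast x j) (t := univ)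
      (fun _ _ => mem_univ _)]
    refine Finset.sum_congr rfl fun w _ => ?_
    rw [hx' (v, w)]
    congr 1
    ext j
    simp only [mem_filter, mem_univ, true_and, Finset.filter_filter, Prod.ext_iff]
  -- the injection
  set Φ : (Fin n → X) → X × (∀ v, Fin (d v) → X) := fun x =>
    (if h : 0 < n then x ⟨0, h⟩ else xlast,
     fun v => if h : (univ.filter fun j : Fin n => x j = v).card = d v
       then fun k => auxNxt n xlast x
         (((univ.filter fun j : Fin n => x j = v).orderIsoOfFin h k : Fin n))
       else fun _ => xlast) with hΦ
  set T : Finset (X × (∀ v, Fin (d v) → X)) := univ ×ˢ Fintype.piFinset fun v =>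
    univ.filter fun f : Fin (d v) → X => ∀ w, A (v, w) = (univ.filter fun k => f k = w).card
    with hT
  have hmaps : ∀ x ∈ S, Φ x ∈ T := by
    intro x hx
    rw [hT, Finset.mem_product]
    refine ⟨mem_univ _, ?_⟩
    rw [Fintype.mem_piFinset]
    intro v
    rw [mem_filter]
    refine ⟨mem_univ _, ?_⟩
    intro w
    have hcx := hJ x hx v
    simp only [hΦ, dif_pos hcx]
    have hbij : (univ.filter fun k : Fin (d v) =>
        auxNxt n xlast x (((univ.filter fun j : Fin n => x j = v).orderIsoOfFin hcx k : Fin n)) = w).card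
        = (univ.filter fun j : Fin n => (x j, auxNxt n xlast x j) = (v, w)).card := by
      apply Finset.card_bij (fun k _ => (((univ.filter fun j : Fin n => x j = v).orderIsoOfFin hcx k : Fin n)))
      · intro k hk
        simp only [mem_filter, mem_univ, true_and] at hk ⊢
        have hmem := ((univ.filter fun j : Fin n => x j = v).orderIsoOfFin hcx k).2
        simp only [mem_filter, mem_univ, true_and] at hmem
        exact Prod.ext_iff.mpr ⟨hmem, hk⟩
      · intro k _ k' _ hkk'
        exact ((univ.filter fun j : Fin n => x j = v).orderIsoOfFin hcx).injective
          (Subtype.coe_injective hkk')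
      · intro j hj
        simp only [mem_filter, mem_univ, true_and, Prod.ext_iff] at hj
        have hjm : j ∈ univ.filter fun i : Fin n => x i = v := by
          simp only [mem_filter, mem_univ, true_and]; exact hj.1
        refine ⟨((univ.filter fun i : Fin n => x i = v).orderIsoOfFin hcx).symm ⟨j, hjm⟩, ?_, ?_⟩
        · simp only [mem_filter, mem_univ, true_and, OrderIso.apply_symm_apply]
          exact hj.2
        · simp
    rw [hbij]
    rw [hS, mem_filter] at hx
    exact hx.2 (v, w)
  have hinj : Set.InjOn Φ ↑S := by
    intro x hx' y hy' hxy
    have hx : x ∈ S := hx'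
    have hy : y ∈ S := hy'
    have h1 := congrArg Prod.fst hxy
    have h2 := congrArg Prod.snd hxy
    simp only [hΦ] at h1 h2
    have key : ∀ m : ℕ, ∀ j : Fin n, (j : ℕ) < m → x j = y j := by
      intro m
      induction m with
      | zero => exact fun j hj => absurd hj (Nat.not_lt_zero _)
      | succ m ih =>
        intro j hj
        rcases Nat.lt_succ_iff_lt_or_eq.mp hj with h | h
        · exact ih j h
        · cases m with
          | zero =>
            have hn0 : 0 < n := by omega
            rw [dif_pos hn0, dif_pos hn0] at h1
            have hj0 : j = ⟨0, hn0⟩ := Fin.ext h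
            rw [hj0]; exact h1
          | succ m' =>
            have hm' : m' < n := by omega
            set j' : Fin n := ⟨m', hm'⟩ with hj'
            have hxyj' : x j' = y j' := ih j' (by simp [hj'])
            set v := x j' with hv
            have hvy : y j' = v := hxyj'.symm
            have hcx := hJ x hx v
            have hcy := hJ y hy v
            have hjx : j' ∈ univ.filter fun i : Fin n => x i = v := by
              simp only [mem_filter, mem_univ, true_and, hv]
            have hjy : j' ∈ univ.filter fun i : Fin n => y i = v := by
              simp only [mem_filter, mem_univ, true_and, hvy]
            have h2v := congrFun h2 v
            rw [dif_pos hcx, dif_pos hcy] at h2v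
            set isox := (univ.filter fun i : Fin n => x i = v).orderIsoOfFin hcx with hisox
            set isoy := (univ.filter fun i : Fin n => y i = v).orderIsoOfFin hcy with hisoy
            set kx := isox.symm ⟨j', hjx⟩ with hkx
            set ky := isoy.symm ⟨j', hjy⟩ with hky
            have hxkx : (isox kx : Fin n) = j' := by rw [hkx, OrderIso.apply_symm_apply]
            have hyky : (isoy ky : Fin n) = j' := by rw [hky, OrderIso.apply_symm_apply]
            have hkxy : kx = ky := by
              have rx := rank_orderIsoOfFin (univ.filter fun i : Fin n => x i = v) hcx kx
              have ry := rank_orderIsoOfFin (univ.filter fun i : Fin n => y i = v) hcy ky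
              rw [hxkx] at rx
              rw [hyky] at ry
              have hfeq : ((univ.filter fun i : Fin n => x i = v).filter fun a => a < j')
                  = ((univ.filter fun i : Fin n => y i = v).filter fun a => a < j') := by
                ext i
                simp only [mem_filter, mem_univ, true_and]
                have hlt : ∀ hi : i < j', x i = y i := fun hi => ih i (by
                  have : (i : ℕ) < m' := hi
                  omega)
                constructor
                · rintro ⟨ha, hb⟩; exact ⟨by rw [← hlt hb]; exact ha, hb⟩
                · rintro ⟨ha, hb⟩; exact ⟨by rw [hlt hb]; exact ha, hb⟩
              apply Fin.ext
              rw [← rx, ← ry, hfeq]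
            have hnxt_eq : auxNxt n xlast x j' = auxNxt n xlast y j' := by
              have e1 := congrFun h2v kx
              rw [hxkx] at e1
              rw [hkxy, hyky] at e1
              exact e1
            have hj1 : (m' : ℕ) + 1 < n := by omega
            have hjval : j = ⟨m' + 1, hj1⟩ := Fin.ext h
            have ex : auxNxt n xlast x j' = x ⟨m' + 1, hj1⟩ := by
              simp only [auxNxt, hj']
              rw [dif_pos hj1]
            have ey : auxNxt n xlast y j' = y ⟨m' + 1, hj1⟩ := by
              simp only [auxNxt, hj']
              rw [dif_pos hj1]
            rw [hjval, ← ex, ← ey]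
            exact hnxt_eq
    funext j
    exact key n j j.isLt
  have hST : S.card ≤ T.card := Finset.card_le_card_of_injOn Φ hmaps hinj
  have hTcard : T.card = Fintype.card X * ∏ v, (univ.filter fun f : Fin (d v) → X =>
      ∀ w, A (v, w) = (univ.filter fun k => f k = w).card).card := by
    rw [hT, Finset.card_product, Fintype.card_piFinset, Finset.card_univ]
  -- key natural number inequality
  have hkey : S.card * ∏ l : X × X, (A l).factorial
      ≤ Fintype.card X * ∏ v, (d v).factorial := by
    calc S.card * ∏ l : X × X, (A l).factorial
        = S.card * ∏ v, ∏ w, (A (v, w)).factorial := by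
          rw [Fintype.prod_prod_type]
      _ ≤ (Fintype.card X * ∏ v, (univ.filter fun f : Fin (d v) → X =>
            ∀ w, A (v, w) = (univ.filter fun k => f k = w).card).card) * ∏ v, ∏ w, (A (v, w)).factorial := by
          exact Nat.mul_le_mul_right _ (hST.trans_eq hTcard)
      _ = Fintype.card X * ∏ v, ((univ.filter fun f : Fin (d v) → X =>
            ∀ w, A (v, w) = (univ.filter fun k => f k = w).card).card * ∏ w, (A (v, w)).factorial) := by
          rw [mul_assoc, ← Finset.prod_mul_distrib]
      _ ≤ Fintype.card X * ∏ v, (d v).factorial := by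
          refine Nat.mul_le_mul_left _ (Finset.prod_le_prod' fun v _ => ?_)
          exact aux_count (fun w => A (v, w)) (d v) rfl
  have hpos : (0 : ℝ) < ∏ l : X × X, ((A l).factorial : ℝ) :=
    Finset.prod_pos fun l _ => by exact_mod_cast (A l).factorial_pos
  rw [le_div_iff₀ hpos]
  calc (S.card : ℝ) * ∏ l : X × X, ((A l).factorial : ℝ)
      = ((S.card * ∏ l : X × X, (A l).factorial : ℕ) : ℝ) := by push_cast; ring
    _ ≤ ((Fintype.card X * ∏ v, (d v).factorial : ℕ) : ℝ) := by exact_mod_cast hkey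
    _ = (Fintype.card X : ℝ) * ∏ l₁ : X, ((∑ l₂ : X, A (l₁, l₂)).factorial : ℝ) := by
        push_cast; rfl
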